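/- Let Γ be an amenable group (satisfying the Følner condition) and suppose the group algebra ℂ[Γ] is a domain. Then ℂ[Γ] satisfies the right Ore condition with respect to the set Z of all nonzero elements: for every a ∈ ℂ[Γ] and every s ∈ ℂ[Γ], s ≠ 0, there exist b ∈ ℂ[Γ] and t ∈ ℂ[Γ], t ≠ 0, with a·t = s·b. -/

import Mathlib

/-- Følner's condition for a discrete group `Γ`: for every finite `S ⊆ Γ` and `ε > 0`
there is a finite nonempty `F ⊆ Γ` with `|{g ∈ F : Sg ⊄ F}| < ε |F|`. -/
def GroupFolner (Γ : Type*) [Group Γ] [DecidableEq Γ] : Prop :=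
  ∀ S : Finset Γ, ∀ ε : ℝ, 0 < ε → ∃ F : Finset Γ, F.Nonempty ∧
    ((F.filter (fun g => ¬ S.image (· * g) ⊆ F)).card : ℝ) < ε * (F.card : ℝ)

theorem groupAlgebra_ore_condition {Γ : Type*} [Group Γ] [DecidableEq Γ]
    (hFol : GroupFolner Γ) [IsDomain (MonoidAlgebra ℂ Γ)]
    (a s : MonoidAlgebra ℂ Γ) (hs : s ≠ 0) :
    ∃ b t : MonoidAlgebra ℂ Γ, t ≠ 0 ∧ a * t = s * b := by
  classical
  set S : Finset Γ := a.coeff.support ∪ s.coeff.support with hSdef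
  obtain ⟨F, hFne, hFcard⟩ := hFol S (1/2) (by norm_num)
  set I : Finset Γ := F.filter (fun g => S.image (· * g) ⊆ F) with hIdef
  have hcard : F.card < 2 * I.card := by
    have h1 : I.card + (F.filter (fun g => ¬ S.image (· * g) ⊆ F)).card = F.card :=
      Finset.card_filter_add_card_filter_not _
    have h2 : ((F.filter (fun g => ¬ S.image (· * g) ⊆ F)).card : ℝ)
        < (1/2) * F.card := hFcard
    have : (F.card : ℝ) < 2 * I.card := by
      have := congrArg (fun n : ℕ => (n : ℝ)) h1
      push_cast at this
      linarith
    exact_mod_cast this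
  -- support lemma
  have hsupp : ∀ (x t : MonoidAlgebra ℂ Γ), x.coeff.support ⊆ S → t.coeff.support ⊆ I →
      (x * t).coeff.support ⊆ F := by
    intro x t hx ht g hg
    obtain ⟨u, hu, v, hv, rfl⟩ := Finset.mem_mul.mp (MonoidAlgebra.support_coeff_mul_subset x t hg)
    have hvI : v ∈ I := ht hv
    rw [hIdef, Finset.mem_filter] at hvI
    exact hvI.2 (Finset.mem_image_of_mem _ (hx hu))
  -- extension map
  let e : ((↥(↑I : Set Γ)) →₀ ℂ) →ₗ[ℂ] MonoidAlgebra ℂ Γ :=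
    (MonoidAlgebra.coeffLinearEquiv ℂ).symm.toLinearMap.comp (Finsupp.lmapDomain ℂ ℂ Subtype.val)
  have he_inj : Function.Injective e :=
    (MonoidAlgebra.coeffLinearEquiv ℂ).symm.injective.comp (Finsupp.mapDomain_injective Subtype.val_injective)
  have he_supp : ∀ p : ((↥(↑I : Set Γ)) →₀ ℂ), (e p).coeff.support ⊆ I := by
    intro p
    refine (Finsupp.mapDomain_support).trans ?_
    intro g hg
    obtain ⟨⟨g', hg'⟩, -, rfl⟩ := Finset.mem_image.mp hg
    exact hg'
  -- the linear map
  let ψ : (((↥(↑I : Set Γ)) →₀ ℂ) × ((↥(↑I : Set Γ)) →₀ ℂ)) →ₗ[ℂ] MonoidAlgebra ℂ Γ :=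
    (LinearMap.mulLeft ℂ a).comp (e.comp (LinearMap.fst ℂ _ _))
      - (LinearMap.mulLeft ℂ s).comp (e.comp (LinearMap.snd ℂ _ _))
  let φ : (((↥(↑I : Set Γ)) →₀ ℂ) × ((↥(↑I : Set Γ)) →₀ ℂ)) →ₗ[ℂ] ((↥(↑F : Set Γ)) →₀ ℂ) :=
    (Finsupp.lsubtypeDomain (↑F : Set Γ)).comp ((MonoidAlgebra.coeffLinearEquiv ℂ).toLinearMap.comp ψ)
  have hψsupp : ∀ p, (ψ p).coeff.support ⊆ F := by
    intro p
    have h1 : (a * e p.1).coeff.support ⊆ F :=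
      hsupp a (e p.1) (Finset.subset_union_left) (he_supp p.1)
    have h2 : (s * e p.2).coeff.support ⊆ F :=
      hsupp s (e p.2) (Finset.subset_union_right) (he_supp p.2)
    have : ψ p = a * e p.1 - s * e p.2 := rfl
    rw [this]
    rw [MonoidAlgebra.coeff_sub]
    exact (Finsupp.support_sub).trans (Finset.union_subset h1 h2)
  have hφ_noninj : ¬ Function.Injective φ := by
    intro hinj
    have hle := LinearMap.finrank_le_finrank_of_injective hinj
    rw [Module.finrank_prod, Module.finrank_finsupp_self, Module.finrank_finsupp_self] at hle
    simp only [Finset.coe_sort_coe, Fintype.card_coe] at hle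
    omega
  rw [Function.not_injective_iff] at hφ_noninj
  obtain ⟨x, y, hxy, hne⟩ := hφ_noninj
  set p := x - y with hpdef
  have hp0 : p ≠ 0 := sub_ne_zero.mpr hne
  have hφp : φ p = 0 := by rw [hpdef, map_sub, hxy, sub_self]
  have hψp : ψ p = 0 := by
    apply MonoidAlgebra.coeff_injective
    ext g
    by_cases hg : g ∈ (↑F : Set Γ)
    · have : (ψ p).coeff g = (Finsupp.subtypeDomain (fun x => x ∈ (↑F : Set Γ)) (ψ p).coeff) ⟨g, hg⟩ := rfl
      rw [this]
      have : Finsupp.subtypeDomain (fun x => x ∈ (↑F : Set Γ)) (ψ p).coeff = 0 := hφp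
      rw [this]; rfl
    · rw [MonoidAlgebra.coeff_zero, Finsupp.zero_apply]
      by_contra h
      exact hg (hψsupp p (Finsupp.mem_support_iff.mpr h))
  have hkey : a * e p.1 = s * e p.2 := by
    have : ψ p = a * e p.1 - s * e p.2 := rfl
    rw [this] at hψp
    exact sub_eq_zero.mp hψp
  have ht0 : e p.1 ≠ 0 := by
    intro h
    have hp1 : p.1 = 0 := he_inj (by rw [h, map_zero])
    have : s * e p.2 = 0 := by rw [← hkey, h, mul_zero]
    have hb : e p.2 = 0 := by
      rcases mul_eq_zero.mp this with h' | h'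
      · exact absurd h' hs
      · exact h'
    have hp2 : p.2 = 0 := he_inj (by rw [hb, map_zero])
    exact hp0 (Prod.ext hp1 hp2)
  exact ⟨e p.2, e p.1, ht0, hkey⟩
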